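/- arXiv:1301.6901 — 2 statements merged into one kernel-verified Lean document; each statement's English description precedes it below -/
import Mathlib

section
/- Let U = T_z be the unilateral shift on H². The block operator A := [[U*, U* + 2U],[U* + 2U, U*]] on H² ⊕ H² is quasinormal (and therefore subnormal), and A is not normal. In particular A is a subnormal completion of the partial block Toeplitz matrix with diagonal entries U*, U* whose off-diagonal entries are Toeplitz operators. -/
noncomputable section
open MeasureTheory Complex Filter Matrix
open scoped ENNReal ComplexConjugate Real

namespace Paper

instance fact_two_pi_pos : Fact (0 < 2 * Real.pi) := ⟨by positivity⟩
abbrev 𝕋 : Type := AddCircle (2 * Real.pi)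
abbrev μh : Measure 𝕋 := AddCircle.haarAddCircle

variable {E : Type} [NormedAddCommGroup E] [NormedSpace ℂ E]

section smul

lemma memLp_smul (φ : 𝕋 → ℂ) (hm : AEStronglyMeasurable φ μh) (C : ℝ)
    (hb : ∀ᵐ x ∂μh, ‖φ x‖ ≤ C) (f : Lp E 2 μh) :
    MemLp (fun x => φ x • (f : 𝕋 → E) x) 2 μh := by
  refine MemLp.of_le_mul (c := C) (Lp.memLp f) (hm.smul (Lp.aestronglyMeasurable f)) ?_
  filter_upwards [hb] with x hx
  rw [norm_smul]
  exact mul_le_mul_of_nonneg_right hx (norm_nonneg _)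

lemma eLpNorm_smul_le (φ : 𝕋 → ℂ) (C : ℝ)
    (hb : ∀ᵐ x ∂μh, ‖φ x‖ ≤ C) (f : Lp E 2 μh) :
    eLpNorm (fun x => φ x • (f : 𝕋 → E) x) 2 μh ≤
      ENNReal.ofReal (max C 0) * eLpNorm (f : 𝕋 → E) 2 μh := by
  have h1 : eLpNorm (fun x => φ x • (f : 𝕋 → E) x) 2 μh ≤
      eLpNorm ((max C 0 : ℝ) • (f : 𝕋 → E)) 2 μh := by
    refine eLpNorm_mono_ae ?_
    filter_upwards [hb] with x hx
    rw [Pi.smul_apply, norm_smul, norm_smul, Real.norm_eq_abs,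
      _root_.abs_of_nonneg (le_max_right C 0)]
    exact mul_le_mul_of_nonneg_right (hx.trans (le_max_left _ _)) (norm_nonneg _)
  refine h1.trans_eq ?_
  rw [eLpNorm_const_smul]
  congr 1
  rw [← ofReal_norm, Real.norm_eq_abs, _root_.abs_of_nonneg (le_max_right C 0)]

/-- Pointwise multiplication by a bounded measurable scalar function, as a bounded operator
on a vector-valued `L²` space. -/
def smulCLMOf (φ : 𝕋 → ℂ) (hm : AEStronglyMeasurable φ μh) (C : ℝ)
    (hb : ∀ᵐ x ∂μh, ‖φ x‖ ≤ C) : Lp E 2 μh →L[ℂ] Lp E 2 μh :=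
  LinearMap.mkContinuous
    { toFun := fun f => (memLp_smul φ hm C hb f).toLp _
      map_add' := by
        intro f g
        refine Lp.ext ?_
        filter_upwards [MemLp.coeFn_toLp (memLp_smul φ hm C hb (f + g)),
          MemLp.coeFn_toLp (memLp_smul φ hm C hb f),
          MemLp.coeFn_toLp (memLp_smul φ hm C hb g),
          Lp.coeFn_add f g,
          Lp.coeFn_add ((memLp_smul φ hm C hb f).toLp _)
            ((memLp_smul φ hm C hb g).toLp _)] with x h1 h2 h3 h4 h5
        simp only [h1, h4, h5, Pi.add_apply, h2, h3, smul_add]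
      map_smul' := by
        intro c f
        refine Lp.ext ?_
        filter_upwards [MemLp.coeFn_toLp (memLp_smul φ hm C hb (c • f)),
          MemLp.coeFn_toLp (memLp_smul φ hm C hb f),
          Lp.coeFn_smul c f,
          Lp.coeFn_smul c ((memLp_smul φ hm C hb f).toLp _)] with x h1 h2 h3 h4
        simp only [h1, h3, h4, Pi.smul_apply, h2, RingHom.id_apply]
        exact smul_comm _ _ _ }
    (max C 0)
    (by
      intro f
      simp only [LinearMap.coe_mk, AddHom.coe_mk]
      rw [Lp.norm_toLp, Lp.norm_def]
      have := eLpNorm_smul_le (E := E) φ C hb f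
      calc (eLpNorm (fun x => φ x • (f : 𝕋 → E) x) 2 μh).toReal
          ≤ (ENNReal.ofReal (max C 0) * eLpNorm (f : 𝕋 → E) 2 μh).toReal := by
            refine ENNReal.toReal_mono ?_ this
            exact ENNReal.mul_ne_top ENNReal.ofReal_ne_top (Lp.eLpNorm_ne_top f)
        _ = (max C 0) * (eLpNorm (f : 𝕋 → E) 2 μh).toReal := by
            rw [ENNReal.toReal_mul, ENNReal.toReal_ofReal (le_max_right _ _)])

open Classical in
/-- Pointwise multiplication by a scalar function, as a bounded operator on a vector-valued
`L²` space (junk value `0` if the symbol is not essentially bounded measurable). -/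
def smulCLM (φ : 𝕋 → ℂ) : Lp E 2 μh →L[ℂ] Lp E 2 μh :=
  if h : AEStronglyMeasurable φ μh ∧ ∃ C : ℝ, ∀ᵐ x ∂μh, ‖φ x‖ ≤ C then
    smulCLMOf φ h.1 h.2.choose h.2.choose_spec
  else 0

lemma smulCLM_coeFn (φ : 𝕋 → ℂ) (hm : AEStronglyMeasurable φ μh)
    (hb : ∃ C : ℝ, ∀ᵐ x ∂μh, ‖φ x‖ ≤ C) (f : Lp E 2 μh) :
    (smulCLM φ f : 𝕋 → E) =ᵐ[μh] fun x => φ x • (f : 𝕋 → E) x := by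
  classical
  unfold smulCLM
  rw [dif_pos ⟨hm, hb⟩]
  exact MemLp.coeFn_toLp (memLp_smul φ hm _ hb.choose_spec f)

end smul

/-- Composition with the reflection `x ↦ -x` (i.e. `z ↦ z̄`) as an operator on `L²`. -/
def reflCLM : Lp E 2 μh →L[ℂ] Lp E 2 μh :=
  (Lp.compMeasurePreservingₗᵢ (E := E) (p := 2) ℂ (fun x : 𝕋 => -x)
    (Measure.measurePreserving_neg μh)).toContinuousLinearMap

/-- The boundary coordinate `z = e^{it}` on the circle. -/
def ζ (x : 𝕋) : ℂ := (AddCircle.toCircle x : ℂ)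

/-- Scalar `L²` space of the circle. -/
abbrev L2 := Lp ℂ 2 μh

/-- The Hardy space `H²`: the closed span in `L²` of the nonnegative Fourier modes. -/
def H2 : Submodule ℂ L2 :=
  (Submodule.span ℂ (Set.range fun n : ℕ => fourierLp 2 (n : ℤ))).topologicalClosure

instance : CompleteSpace H2 :=
  IsClosed.completeSpace_coe (hs := Submodule.isClosed_topologicalClosure _)

/-- `ℂⁿ`-valued `L²` space of the circle. -/
abbrev L2v (n : ℕ) := Lp (EuclideanSpace ℂ (Fin n)) 2 μh

/-- The vector-valued Hardy space `H²_{ℂⁿ}`: the closed span of the analytic monomials. -/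
def H2v (n : ℕ) : Submodule ℂ (L2v n) :=
  (Submodule.span ℂ (Set.range fun q : ℕ × Fin n =>
    (ContinuousLinearMap.toSpanSingleton ℂ
      (EuclideanSpace.single q.2 (1 : ℂ))).compLp (fourierLp 2 (q.1 : ℤ)))).topologicalClosure

instance (n : ℕ) : CompleteSpace (H2v n) :=
  IsClosed.completeSpace_coe (hs := Submodule.isClosed_topologicalClosure _)

/-- Pointwise multiplication by a matrix-valued function, as an operator on `ℂⁿ`-valued `L²`
(built from its scalar matrix entries). -/
def matMulCLM {n : ℕ} (Φ : 𝕋 → Matrix (Fin n) (Fin n) ℂ) : L2v n →L[ℂ] L2v n :=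
  ∑ i : Fin n, ∑ j : Fin n,
    (ContinuousLinearMap.toSpanSingleton ℂ (EuclideanSpace.single i (1 : ℂ))).compLpL 2 μh ∘L
      (smulCLM (E := ℂ) fun x => Φ x i j) ∘L (EuclideanSpace.proj j).compLpL 2 μh

/-- The unitary operator `J` on `L²_{ℂⁿ}`, `(J F)(z) = z̄ ⬝ F(z̄)`. -/
def Jop (n : ℕ) : L2v n →L[ℂ] L2v n :=
  smulCLM (E := EuclideanSpace ℂ (Fin n)) (fun x => conj (ζ x)) ∘L reflCLM

/-- The Toeplitz operator with scalar symbol `φ`, acting on `H²`. -/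
def toeplitz (φ : 𝕋 → ℂ) : H2 →L[ℂ] H2 :=
  Submodule.orthogonalProjectionOnto H2 ∘L smulCLM (E := ℂ) φ ∘L H2.subtypeL

/-- The block Toeplitz operator with matrix symbol `Φ`, acting on `H²_{ℂⁿ}`. -/
def toeplitzM {n : ℕ} (Φ : 𝕋 → Matrix (Fin n) (Fin n) ℂ) : H2v n →L[ℂ] H2v n :=
  Submodule.orthogonalProjectionOnto (H2v n) ∘L matMulCLM Φ ∘L (H2v n).subtypeL

/-- The block Hankel operator with matrix symbol `Φ`, `H_Φ F = J P⊥ (Φ F)`,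
acting on `H²_{ℂⁿ}`. -/
def hankelM {n : ℕ} (Φ : 𝕋 → Matrix (Fin n) (Fin n) ℂ) : H2v n →L[ℂ] H2v n :=
  Submodule.orthogonalProjectionOnto (H2v n) ∘L Jop n ∘L
    (ContinuousLinearMap.id ℂ (L2v n) - (H2v n).subtypeL ∘L Submodule.orthogonalProjectionOnto (H2v n)) ∘L
      matMulCLM Φ ∘L (H2v n).subtypeL

section OperatorTheory

variable {H : Type} [NormedAddCommGroup H] [InnerProductSpace ℂ H] [CompleteSpace H]

open ContinuousLinearMap in
/-- The commutator `[S, T] = S T − T S`. -/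
def commutatorOp (S T : H →L[ℂ] H) : H →L[ℂ] H := S ∘L T - T ∘L S

open ContinuousLinearMap in
/-- The self-commutator `[T*, T] = T*T − TT*`. -/
def selfCommutator (T : H →L[ℂ] H) : H →L[ℂ] H := commutatorOp (adjoint T) T

open ContinuousLinearMap in
/-- A bounded operator is normal if it commutes with its adjoint. -/
def IsNormalOp (T : H →L[ℂ] H) : Prop := adjoint T ∘L T = T ∘L adjoint T

/-- A bounded operator is hyponormal if its self-commutator `[T*,T]` is positive. -/
def IsHyponormalOp (T : H →L[ℂ] H) : Prop := (selfCommutator T).IsPositive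

open ContinuousLinearMap in
/-- A bounded operator is quasinormal if it commutes with `T*T`. -/
def IsQuasinormalOp (T : H →L[ℂ] H) : Prop :=
  T ∘L (adjoint T ∘L T) = (adjoint T ∘L T) ∘L T

/-- A bounded operator on a complex Hilbert space is subnormal if it is (unitarily equivalent
to) the restriction of a normal operator to an invariant subspace. -/
def IsSubnormalOp (T : H →L[ℂ] H) : Prop :=
  ∃ (K : Type) (_ : NormedAddCommGroup K) (_ : InnerProductSpace ℂ K) (_ : CompleteSpace K),
    ∃ (V : H →ₗᵢ[ℂ] K) (N : K →L[ℂ] K), IsNormalOp N ∧ ∀ h : H, N (V h) = V (T h)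

open ContinuousLinearMap in
/-- A bounded operator is `2`-hyponormal if the operator `2×2`-matrix
`([T*ʲ, Tⁱ])_{1 ≤ i,j ≤ 2}` is positive. -/
def Is2HyponormalOp (T : H →L[ℂ] H) : Prop :=
  ∀ v : Fin 2 → H, 0 ≤
    (∑ i : Fin 2, ∑ j : Fin 2,
        (inner ℂ (v i) ((commutatorOp (adjoint T ^ ((j : ℕ) + 1)) (T ^ ((i : ℕ) + 1))) (v j)) : ℂ)).re

/-- The kernel of the self-commutator of `T` is invariant under `T`. -/
def SelfCommutatorKerInvariant (T : H →L[ℂ] H) : Prop :=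
  ∀ f : H, selfCommutator T f = 0 → selfCommutator T (T f) = 0

end OperatorTheory

/-- `H² ⊕ H²` with its Hilbert space structure. -/
abbrev H2sq := WithLp 2 (H2 × H2)

open ContinuousLinearMap in
/-- The `2 × 2` block operator `[[T₁₁, T₁₂], [T₂₁, T₂₂]]` acting on `H² ⊕ H²`. -/
def blockOp (T₁₁ T₁₂ T₂₁ T₂₂ : H2 →L[ℂ] H2) : H2sq →L[ℂ] H2sq :=
  ((WithLp.prodContinuousLinearEquiv 2 ℂ (↥H2) (↥H2)).symm :
      (↥H2 × ↥H2) →L[ℂ] H2sq) ∘L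
    (((T₁₁ ∘L fst ℂ (↥H2) (↥H2) + T₁₂ ∘L snd ℂ (↥H2) (↥H2)).prod
      (T₂₁ ∘L fst ℂ (↥H2) (↥H2) + T₂₂ ∘L snd ℂ (↥H2) (↥H2))) ∘L
    ((WithLp.prodContinuousLinearEquiv 2 ℂ (↥H2) (↥H2)) : H2sq →L[ℂ] (↥H2 × ↥H2)))

section FunctionClasses

/-- A function on the circle is in (the boundary-value space of) `H^∞`: it is essentially
bounded and its negative Fourier coefficients vanish. -/
def InHinf (ψ : 𝕋 → ℂ) : Prop :=
  MemLp ψ ∞ μh ∧ ∀ n : ℤ, n < 0 → fourierCoeff ψ n = 0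

/-- A function on the circle is in `H²`: it is square-integrable and its negative Fourier
coefficients vanish. -/
def InH2fun (ψ : 𝕋 → ℂ) : Prop :=
  MemLp ψ 2 μh ∧ ∀ n : ℤ, n < 0 → fourierCoeff ψ n = 0

/-- `φ` is of bounded type: a quotient of two `H^∞` functions. -/
def BoundedType (φ : 𝕋 → ℂ) : Prop :=
  ∃ ψ₁ ψ₂ : 𝕋 → ℂ, InHinf ψ₁ ∧ InHinf ψ₂ ∧ (∀ᵐ x ∂μh, ψ₂ x ≠ 0) ∧
    φ =ᵐ[μh] fun x => ψ₁ x / ψ₂ x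

/-- A scalar inner function: an `H^∞` function which is unimodular a.e. on the circle. -/
def ScalarInner (θ : 𝕋 → ℂ) : Prop := InHinf θ ∧ ∀ᵐ x ∂μh, ‖θ x‖ = 1

/-- A function which is a.e. constant. -/
def AEConst (f : 𝕋 → ℂ) : Prop := ∃ c : ℂ, f =ᵐ[μh] fun _ => c

/-- The boundary values of the Blaschke factor `b_λ(z) = (z − λ)/(1 − λ̄ z)`. -/
def blaschkeF (lam : ℂ) : 𝕋 → ℂ := fun x => (ζ x - lam) / (1 - (starRingEnd ℂ) lam * ζ x)

/-- A finite Blaschke product: a finite product of Blaschke factors times a unimodular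
constant. -/
def IsFiniteBlaschke (θ : 𝕋 → ℂ) : Prop :=
  ∃ (k : ℕ) (c : ℂ) (lam : Fin k → ℂ), ‖c‖ = 1 ∧ (∀ i, ‖lam i‖ < 1) ∧
    ∀ x, θ x = c * ∏ i, blaschkeF (lam i) x

/-- The value at `α ∈ 𝔻` of the analytic extension to the disc of an `H²` function on the
circle. -/
def hardyEval (φ : 𝕋 → ℂ) (α : ℂ) : ℂ := ∑' k : ℕ, fourierCoeff φ (k : ℤ) * α ^ k

/-- The (scalar) inner function `ω` divides `ψ` (in `H²`). -/
def ScalarInnerDvd (ω ψ : 𝕋 → ℂ) : Prop :=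
  ∃ g : 𝕋 → ℂ, InH2fun g ∧ ψ =ᵐ[μh] fun x => ω x * g x

/-- Two functions in `H²` are coprime: every common inner divisor is constant. -/
def ScalarCoprime (ψ₁ ψ₂ : 𝕋 → ℂ) : Prop :=
  ∀ ω : 𝕋 → ℂ, ScalarInner ω → ScalarInnerDvd ω ψ₁ → ScalarInnerDvd ω ψ₂ → AEConst ω

/-- A matrix function with all entries in `H²`. -/
def MatInH2 {n m : ℕ} (Φ : 𝕋 → Matrix (Fin n) (Fin m) ℂ) : Prop :=
  ∀ i j, InH2fun fun x => Φ x i j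

/-- A matrix function with all entries in `H^∞`. -/
def MatInHinf {n m : ℕ} (Φ : 𝕋 → Matrix (Fin n) (Fin m) ℂ) : Prop :=
  ∀ i j, InHinf fun x => Φ x i j

/-- A matrix function with all entries in `L^∞`. -/
def MatMemLinf {n m : ℕ} (Φ : 𝕋 → Matrix (Fin n) (Fin m) ℂ) : Prop :=
  ∀ i j, MemLp (fun x => Φ x i j) ∞ μh

/-- A matrix function of bounded type (all entries of bounded type). -/
def MatBoundedType {n m : ℕ} (Φ : 𝕋 → Matrix (Fin n) (Fin m) ℂ) : Prop :=
  ∀ i j, BoundedType fun x => Φ x i j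

/-- An inner matrix function: `Θ ∈ H^∞` with `Θ(z)*Θ(z) = I` a.e. -/
def MatInner {n m : ℕ} (Θ : 𝕋 → Matrix (Fin n) (Fin m) ℂ) : Prop :=
  MatInHinf Θ ∧ ∀ᵐ x ∂μh, (Θ x)ᴴ * Θ x = 1

/-- `Δ` is a left inner divisor of `Φ`: `Δ` is inner and `Φ = ΔA` for some `H²` matrix
function `A`. -/
def IsLeftInnerDiv {n m r : ℕ} (Δ : 𝕋 → Matrix (Fin n) (Fin m) ℂ)
    (Φ : 𝕋 → Matrix (Fin n) (Fin r) ℂ) : Prop :=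
  MatInner Δ ∧ ∃ A : 𝕋 → Matrix (Fin m) (Fin r) ℂ, MatInH2 A ∧ ∀ᵐ x ∂μh, Φ x = Δ x * A x

/-- Two matrix `H²` functions are left coprime: their only common left inner divisor is a
unitary (isometric) constant. -/
def LeftCoprime {n r s : ℕ} (Φ : 𝕋 → Matrix (Fin n) (Fin r) ℂ)
    (Ψ : 𝕋 → Matrix (Fin n) (Fin s) ℂ) : Prop :=
  ∀ (m : ℕ) (Δ : 𝕋 → Matrix (Fin n) (Fin m) ℂ), IsLeftInnerDiv Δ Φ → IsLeftInnerDiv Δ Ψ →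
    ∃ U : Matrix (Fin n) (Fin m) ℂ, Uᴴ * U = 1 ∧ ∀ᵐ x ∂μh, Δ x = U

/-- `Φ̃(z) := Φ(z̄)*`. -/
def mtilde {n m : ℕ} (Φ : 𝕋 → Matrix (Fin n) (Fin m) ℂ) : 𝕋 → Matrix (Fin m) (Fin n) ℂ :=
  fun x => (Φ (-x))ᴴ

/-- Two matrix `H²` functions are right coprime if their tildes are left coprime. -/
def RightCoprime {n m r : ℕ} (Φ : 𝕋 → Matrix (Fin n) (Fin r) ℂ)
    (Ψ : 𝕋 → Matrix (Fin m) (Fin r) ℂ) : Prop :=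
  LeftCoprime (mtilde Φ) (mtilde Ψ)

/-- Coprime: both left and right coprime. -/
def MatCoprime {n : ℕ} (Φ Ψ : 𝕋 → Matrix (Fin n) (Fin n) ℂ) : Prop :=
  LeftCoprime Φ Ψ ∧ RightCoprime Φ Ψ

/-- `φ = φ₋* + φ₊` with `φ₊, φ₋ ∈ H²` (scalar version). -/
def IsHardyDecomp (φ φp φm : 𝕋 → ℂ) : Prop :=
  InH2fun φp ∧ InH2fun φm ∧ φ =ᵐ[μh] fun x => (starRingEnd ℂ) (φm x) + φp x

/-- `Φ = Φ₋* + Φ₊` with `Φ₊, Φ₋ ∈ H²_{Mₙ}` (matrix version). -/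
def IsMatHardyDecomp {n : ℕ} (Φ Φp Φm : 𝕋 → Matrix (Fin n) (Fin n) ℂ) : Prop :=
  MatInH2 Φp ∧ MatInH2 Φm ∧ ∀ᵐ x ∂μh, Φ x = (Φm x)ᴴ + Φp x

/-- The family of all diagonal-constant inner functions `θ Iₙ` of which `Δ` is a left inner
divisor. -/
def diagConstFam {n : ℕ} (Δ : 𝕋 → Matrix (Fin n) (Fin n) ℂ) :
    Set (𝕋 → Matrix (Fin n) (Fin n) ℂ) :=
  {Θ | ∃ θ : 𝕋 → ℂ, ScalarInner θ ∧ Θ = (fun x => θ x • (1 : Matrix (Fin n) (Fin n) ℂ)) ∧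
    IsLeftInnerDiv Δ Θ}

/-- `G` is a greatest common left inner divisor of the family `S`. -/
def IsGCID {n : ℕ} (S : Set (𝕋 → Matrix (Fin n) (Fin n) ℂ))
    (G : 𝕋 → Matrix (Fin n) (Fin n) ℂ) : Prop :=
  MatInner G ∧ (∀ Θ ∈ S, IsLeftInnerDiv G Θ) ∧
    ∀ (m : ℕ) (G' : 𝕋 → Matrix (Fin n) (Fin m) ℂ), MatInner G' →
      (∀ Θ ∈ S, IsLeftInnerDiv G' Θ) → IsLeftInnerDiv G' G

/-- Matrix acting on a vector of `EuclideanSpace ℂ (Fin n)`. -/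
def mApply {n : ℕ} (M : Matrix (Fin n) (Fin n) ℂ) (v : EuclideanSpace ℂ (Fin n)) :
    EuclideanSpace ℂ (Fin n) :=
  (WithLp.equiv 2 (Fin n → ℂ)).symm (M.mulVec ((WithLp.equiv 2 (Fin n → ℂ)) v))

/-- The subspace `Δ H²_{ℂⁿ}` of `H²_{ℂⁿ}` (as a subset). -/
def matMulSet {n : ℕ} (Δ : 𝕋 → Matrix (Fin n) (Fin n) ℂ) : Set (H2v n) :=
  {f | ∃ g : H2v n, ((f : L2v n) : 𝕋 → EuclideanSpace ℂ (Fin n)) =ᵐ[μh]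
        fun x => mApply (Δ x) (((g : L2v n) : 𝕋 → EuclideanSpace ℂ (Fin n)) x)}

/-- A vector of polynomials, evaluated as a function on the circle. -/
def polyVecApply {n : ℕ} (p : Fin n → Polynomial ℂ) : 𝕋 → EuclideanSpace ℂ (Fin n) :=
  fun x => (WithLp.equiv 2 (Fin n → ℂ)).symm fun i => (p i).eval (ζ x)

/-- A matrix `H²` function is outer: the closure of `F · (vector polynomials)` is all of
`H²_{ℂⁿ}`. -/
def IsMatOuter {n : ℕ} (F : 𝕋 → Matrix (Fin n) (Fin n) ℂ) : Prop :=
  MatInH2 F ∧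
    (Submodule.span ℂ {g : L2v n | ∃ p : Fin n → Polynomial ℂ,
        (g : 𝕋 → EuclideanSpace ℂ (Fin n)) =ᵐ[μh]
          fun x => mApply (F x) (polyVecApply p x)}).topologicalClosure = H2v n

/-- A rational function in `L^∞` of the circle: a quotient of polynomials with no poles on
the circle. -/
def IsRationalFn (φ : 𝕋 → ℂ) : Prop :=
  ∃ p q : Polynomial ℂ, (∀ z : ℂ, ‖z‖ = 1 → q.eval z ≠ 0) ∧
    φ =ᵐ[μh] fun x => Polynomial.eval (ζ x) p / Polynomial.eval (ζ x) q

/-- `φ` is a rational function (no poles on the circle) with exactly `m` poles on the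
Riemann sphere, counted with multiplicity. -/
def RationalPoleCount (φ : 𝕋 → ℂ) (m : ℕ) : Prop :=
  ∃ p q : Polynomial ℂ, IsCoprime p q ∧ q ≠ 0 ∧ (∀ z : ℂ, ‖z‖ = 1 → q.eval z ≠ 0) ∧
    φ =ᵐ[μh] (fun x => Polynomial.eval (ζ x) p / Polynomial.eval (ζ x) q) ∧
    max p.natDegree q.natDegree = m

/-- Entrywise evaluation at `z ∈ 𝔻` of the analytic extension of a matrix `H²` function. -/
def matHardyEval {n m : ℕ} (A : 𝕋 → Matrix (Fin n) (Fin m) ℂ) (z : ℂ) :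
    Matrix (Fin n) (Fin m) ℂ :=
  Matrix.of fun i j => hardyEval (fun x => A x i j) z

end FunctionClasses

end Paper
namespace Paper

open ContinuousLinearMap
open scoped InnerProductSpace


lemma zeta_norm (x : 𝕋) : ‖ζ x‖ = 1 := by
  simp [ζ, Circle.norm_coe]

lemma zeta_continuous : Continuous ζ :=
  continuous_induced_dom.comp AddCircle.continuous_toCircle

lemma zeta_aesm : AEStronglyMeasurable ζ μh := zeta_continuous.aestronglyMeasurable

lemma zeta_bdd : ∃ C : ℝ, ∀ᵐ x ∂μh, ‖ζ x‖ ≤ C :=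
  ⟨1, Eventually.of_forall fun x => (zeta_norm x).le⟩

lemma zetabar_aesm : AEStronglyMeasurable (fun x => conj (ζ x)) μh :=
  (continuous_star.comp zeta_continuous).aestronglyMeasurable

lemma zetabar_bdd : ∃ C : ℝ, ∀ᵐ x ∂μh, ‖conj (ζ x)‖ ≤ C :=
  ⟨1, Eventually.of_forall fun x => by simp [zeta_norm x]⟩

/-- Multiplication by `z` on `L²`. -/
def Mz : L2 →L[ℂ] L2 := smulCLM ζ

/-- Multiplication by `z̄` on `L²`. -/
def Mzb : L2 →L[ℂ] L2 := smulCLM fun x => conj (ζ x)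

lemma Mz_coeFn (f : L2) : (Mz f : 𝕋 → ℂ) =ᵐ[μh] fun x => ζ x * f x := by
  simpa [Mz, smul_eq_mul] using smulCLM_coeFn (E := ℂ) ζ zeta_aesm zeta_bdd f

lemma Mzb_coeFn (f : L2) : (Mzb f : 𝕋 → ℂ) =ᵐ[μh] fun x => conj (ζ x) * f x := by
  simpa [Mzb, smul_eq_mul] using
    smulCLM_coeFn (E := ℂ) (fun x => conj (ζ x)) zetabar_aesm zetabar_bdd f

lemma zeta_conj_mul (x : 𝕋) : conj (ζ x) * ζ x = 1 := by
  have : ζ x * conj (ζ x) = ((Complex.normSq (ζ x) : ℝ) : ℂ) := Complex.mul_conj _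
  rw [mul_comm] at this
  rw [this]
  simp [ζ]

lemma Mzb_comp_Mz : Mzb ∘L Mz = 1 := by
  refine ContinuousLinearMap.ext fun f => ?_
  refine Lp.ext ?_
  filter_upwards [Mzb_coeFn (Mz f), Mz_coeFn f] with x h1 h2
  show (Mzb (Mz f) : 𝕋 → ℂ) x = f x
  rw [h1, h2, ← mul_assoc, zeta_conj_mul, one_mul]

lemma Mz_comp_Mzb : Mz ∘L Mzb = 1 := by
  refine ContinuousLinearMap.ext fun f => ?_
  refine Lp.ext ?_
  filter_upwards [Mz_coeFn (Mzb f), Mzb_coeFn f] with x h1 h2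
  show (Mz (Mzb f) : 𝕋 → ℂ) x = f x
  rw [h1, h2, ← mul_assoc, mul_comm (ζ x), zeta_conj_mul, one_mul]

lemma adjoint_Mz : adjoint Mz = Mzb := by
  symm
  rw [ContinuousLinearMap.eq_adjoint_iff]
  intro x y
  rw [MeasureTheory.L2.inner_def, MeasureTheory.L2.inner_def]
  refine integral_congr_ae ?_
  filter_upwards [Mzb_coeFn x, Mz_coeFn y] with t h1 h2
  rw [h1, h2]
  simp only [RCLike.inner_apply, _root_.map_mul, Complex.conj_conj]
  ring

lemma fourierLp_mem_H2 (n : ℕ) : (fourierLp 2 (n:ℤ) : L2) ∈ H2 :=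
  Submodule.le_topologicalClosure _ (Submodule.subset_span ⟨n, rfl⟩)

lemma Mz_fourierLp (n : ℤ) : Mz (fourierLp 2 n) = fourierLp 2 (n+1) := by
  refine Lp.ext ?_
  filter_upwards [Mz_coeFn (fourierLp 2 n), coeFn_fourierLp 2 n, coeFn_fourierLp 2 (n+1)]
    with x h1 h2 h3
  rw [h1, h2, h3, add_comm n 1, fourier_add]
  congr 1
  rw [fourier_apply, one_zsmul]
  rfl

lemma Mzb_fourierLp (n : ℤ) : Mzb (fourierLp 2 n) = fourierLp 2 (n-1) := by
  refine Lp.ext ?_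
  filter_upwards [Mzb_coeFn (fourierLp 2 n), coeFn_fourierLp 2 n, coeFn_fourierLp 2 (n-1)]
    with x h1 h2 h3
  rw [h1, h2, h3, sub_eq_add_neg, add_comm n (-1), fourier_add, fourier_neg]
  congr 2
  rw [fourier_apply, one_zsmul]
  rfl

lemma Mz_mem_H2 {f : L2} (hf : f ∈ H2) : Mz f ∈ H2 := by
  have hle : H2 ≤ Submodule.comap (Mz : L2 →ₗ[ℂ] L2) H2 := by
    refine Submodule.topologicalClosure_minimal
      (s := Submodule.span ℂ (Set.range fun n : ℕ => fourierLp 2 (n : ℤ))) ?_ ?_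
    · rw [Submodule.span_le]
      rintro x ⟨n, rfl⟩
      simp only [SetLike.mem_coe, Submodule.mem_comap]
      show Mz (fourierLp 2 (n:ℤ)) ∈ H2
      rw [Mz_fourierLp]
      have h : ((n:ℤ)+1) = ((n+1 : ℕ) : ℤ) := by push_cast; ring
      rw [h]
      exact fourierLp_mem_H2 (n+1)
    · exact IsClosed.preimage Mz.continuous (Submodule.isClosed_topologicalClosure _)
  exact hle hf

lemma toeplitz_coe (f : H2) : ((toeplitz ζ f : H2) : L2) = Mz (f:L2) :=
  Submodule.starProjection_eq_self_iff.mpr (Mz_mem_H2 f.2)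

lemma inner_Mz_Mz (f g : L2) : (inner ℂ (Mz f) (Mz g) : ℂ) = inner ℂ f g := by
  rw [← adjoint_inner_left Mz g (Mz f), adjoint_Mz]
  have h2 : Mzb (Mz f) = f := by rw [← ContinuousLinearMap.comp_apply, Mzb_comp_Mz, ContinuousLinearMap.one_apply]
  rw [h2]

lemma clm_eq_one_of_inner {V : Type} [NormedAddCommGroup V] [InnerProductSpace ℂ V]
    (T : V →L[ℂ] V) (h : ∀ x, (inner ℂ (T x) x : ℂ) = inner ℂ x x) : T = 1 := by
  have h2 : ((T - 1 : V →L[ℂ] V) : V →ₗ[ℂ] V) = 0 := by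
    rw [← inner_map_self_eq_zero]
    intro x
    show (inner ℂ ((T - 1) x) x : ℂ) = 0
    rw [ContinuousLinearMap.sub_apply, inner_sub_left, ContinuousLinearMap.one_apply, h, sub_self]
  have h3 : (T - 1 : V →L[ℂ] V) = 0 := ContinuousLinearMap.coe_injective h2
  rwa [sub_eq_zero] at h3

lemma Tz_isometry : adjoint (toeplitz ζ) ∘L (toeplitz ζ) = 1 := by
  refine clm_eq_one_of_inner _ fun f => ?_
  rw [ContinuousLinearMap.comp_apply, adjoint_inner_left, Submodule.coe_inner, toeplitz_coe,
    inner_Mz_Mz, ← Submodule.coe_inner]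

/-- The constant function `1` as an element of `H²`. -/
def e0 : H2 := ⟨fourierLp 2 (0:ℤ), fourierLp_mem_H2 0⟩

lemma inner_fourier_neg_one_H2 {g : L2} (hg : g ∈ H2) :
    (inner ℂ (fourierLp 2 (-1) : L2) g : ℂ) = 0 := by
  have hker : H2 ≤ LinearMap.ker (innerSL ℂ (fourierLp 2 (-1) : L2) : L2 →ₗ[ℂ] ℂ) := by
    refine Submodule.topologicalClosure_minimal
      (s := Submodule.span ℂ (Set.range fun n : ℕ => fourierLp 2 (n : ℤ))) ?_
      (ContinuousLinearMap.isClosed_ker _)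
    rw [Submodule.span_le]
    rintro x ⟨n, rfl⟩
    simp only [SetLike.mem_coe, LinearMap.mem_ker]
    show (inner ℂ (fourierLp 2 (-1) : L2) (fourierLp 2 (n:ℤ)) : ℂ) = 0
    exact orthonormal_fourier.2 (by omega)
  exact hker hg

lemma adjoint_Tz_e0 : adjoint (toeplitz ζ) e0 = 0 := by
  have h : ∀ g : H2, (inner ℂ (adjoint (toeplitz ζ) e0) g : ℂ) = 0 := by
    intro g
    rw [adjoint_inner_left, Submodule.coe_inner, toeplitz_coe,
      ← adjoint_inner_left Mz (g : L2) (e0 : L2), adjoint_Mz]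
    show (inner ℂ (Mzb (fourierLp 2 (0:ℤ))) (g:L2) : ℂ) = 0
    rw [Mzb_fourierLp]
    norm_num
    exact inner_fourier_neg_one_H2 g.2
  have := h (adjoint (toeplitz ζ) e0)
  exact inner_self_eq_zero.mp this

lemma norm_e0 : ‖e0‖ = 1 := by
  show ‖(e0 : L2)‖ = 1
  exact orthonormal_fourier.1 0

section AbstractBlock

variable {E : Type} [NormedAddCommGroup E] [InnerProductSpace ℂ E] [CompleteSpace E]

/-- Abstract 2×2 block operator on `E ⊕₂ E`. -/
def bOp (T₁₁ T₁₂ T₂₁ T₂₂ : E →L[ℂ] E) : WithLp 2 (E × E) →L[ℂ] WithLp 2 (E × E) :=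
  ((WithLp.prodContinuousLinearEquiv 2 ℂ E E).symm :
      (E × E) →L[ℂ] WithLp 2 (E × E)) ∘L
    (((T₁₁ ∘L ContinuousLinearMap.fst ℂ E E + T₁₂ ∘L ContinuousLinearMap.snd ℂ E E).prod
      (T₂₁ ∘L ContinuousLinearMap.fst ℂ E E + T₂₂ ∘L ContinuousLinearMap.snd ℂ E E)) ∘L
    ((WithLp.prodContinuousLinearEquiv 2 ℂ E E) : WithLp 2 (E × E) →L[ℂ] (E × E)))

variable (T₁₁ T₁₂ T₂₁ T₂₂ S₁₁ S₁₂ S₂₁ S₂₂ : E →L[ℂ] E)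

lemma bOp_fst (x : WithLp 2 (E × E)) :
    (bOp T₁₁ T₁₂ T₂₁ T₂₂ x).fst = T₁₁ x.fst + T₁₂ x.snd := rfl

lemma bOp_snd (x : WithLp 2 (E × E)) :
    (bOp T₁₁ T₁₂ T₂₁ T₂₂ x).snd = T₂₁ x.fst + T₂₂ x.snd := rfl

lemma pairL2_ext {x y : WithLp 2 (E × E)} (h1 : x.fst = y.fst) (h2 : x.snd = y.snd) : x = y :=
  (WithLp.ext_iff _).2 (Prod.ext h1 h2)

lemma bOp_congr {e1 e2 e3 e4 f1 f2 f3 f4 : E →L[ℂ] E}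
    (h1 : e1 = f1) (h2 : e2 = f2) (h3 : e3 = f3) (h4 : e4 = f4) :
    bOp e1 e2 e3 e4 = bOp f1 f2 f3 f4 := by
  rw [h1, h2, h3, h4]

lemma bOp_comp :
    bOp S₁₁ S₁₂ S₂₁ S₂₂ ∘L bOp T₁₁ T₁₂ T₂₁ T₂₂ =
      bOp (S₁₁ ∘L T₁₁ + S₁₂ ∘L T₂₁) (S₁₁ ∘L T₁₂ + S₁₂ ∘L T₂₂)
        (S₂₁ ∘L T₁₁ + S₂₂ ∘L T₂₁) (S₂₁ ∘L T₁₂ + S₂₂ ∘L T₂₂) := by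
  refine ContinuousLinearMap.ext fun x => pairL2_ext ?_ ?_ <;>
    simp only [ContinuousLinearMap.comp_apply, bOp_fst, bOp_snd, ContinuousLinearMap.add_apply, _root_.map_add] <;> abel

lemma adjoint_bOp :
    adjoint (bOp T₁₁ T₁₂ T₂₁ T₂₂) =
      bOp (adjoint T₁₁) (adjoint T₂₁) (adjoint T₁₂) (adjoint T₂₂) := by
  symm
  rw [ContinuousLinearMap.eq_adjoint_iff]
  intro x y
  simp only [WithLp.prod_inner_apply, WithLp.ofLp_fst, WithLp.ofLp_snd, bOp_fst, bOp_snd,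
    inner_add_left, inner_add_right, adjoint_inner_left]
  ring

lemma bOp_inj₁₁ {e1 e2 e3 e4 f1 f2 f3 f4 : E →L[ℂ] E}
    (h : bOp e1 e2 e3 e4 = bOp f1 f2 f3 f4) : e1 = f1 := by
  refine ContinuousLinearMap.ext fun g => ?_
  have h2 := congrArg
    (fun T : WithLp 2 (E × E) →L[ℂ] WithLp 2 (E × E) =>
      (T ((WithLp.equiv 2 (E × E)).symm (g, 0))).fst) h
  simpa [bOp_fst, WithLp.toLp_fst, WithLp.toLp_snd] using h2

theorem bOp_quasi (u : E →L[ℂ] E) (hmul : adjoint u * u = 1) :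
    IsQuasinormalOp (bOp (adjoint u) (adjoint u + (2:ℂ) • u)
      (adjoint u + (2:ℂ) • u) (adjoint u)) := by
  have h1 : ∀ x : E →L[ℂ] E, adjoint u * (u * x) = x := fun x => by
    rw [← mul_assoc, hmul, one_mul]
  have hB : adjoint (adjoint u + (2:ℂ) • u) = u + (2:ℂ) • adjoint u := by
    rw [_root_.map_add adjoint, adjoint_adjoint, adjoint.map_smulₛₗ]
    congr 2
    exact map_ofNat _ 2
  unfold IsQuasinormalOp
  rw [adjoint_bOp, hB, adjoint_adjoint]
  rw [bOp_comp, bOp_comp, bOp_comp]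
  refine bOp_congr ?_ ?_ ?_ ?_ <;>
  · simp only [← ContinuousLinearMap.mul_def]
    simp only [two_smul ℂ]
    simp only [mul_add, add_mul, mul_assoc, hmul, h1, mul_one, one_mul]
    abel

theorem bOp_nonnormal (u : E →L[ℂ] E) (hiso : adjoint u ∘L u = 1)
    (f0 : E) (hf0 : adjoint u f0 = 0) (hn : ‖f0‖ = 1) :
    ¬ IsNormalOp (bOp (adjoint u) (adjoint u + (2:ℂ) • u)
      (adjoint u + (2:ℂ) • u) (adjoint u)) := by
  intro hN
  have hB : adjoint (adjoint u + (2:ℂ) • u) = u + (2:ℂ) • adjoint u := by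
    rw [_root_.map_add adjoint, adjoint_adjoint, adjoint.map_smulₛₗ]
    congr 2
    exact map_ofNat _ 2
  have hN' : adjoint (bOp (adjoint u) (adjoint u + (2:ℂ) • u)
        (adjoint u + (2:ℂ) • u) (adjoint u)) ∘L
      bOp (adjoint u) (adjoint u + (2:ℂ) • u) (adjoint u + (2:ℂ) • u) (adjoint u) =
      bOp (adjoint u) (adjoint u + (2:ℂ) • u) (adjoint u + (2:ℂ) • u) (adjoint u) ∘L
        adjoint (bOp (adjoint u) (adjoint u + (2:ℂ) • u)
          (adjoint u + (2:ℂ) • u) (adjoint u)) := hN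
  rw [adjoint_bOp, hB, adjoint_adjoint, bOp_comp, bOp_comp] at hN'
  have h11 := bOp_inj₁₁ hN'
  have he : (u ∘L adjoint u + (u + (2:ℂ) • adjoint u) ∘L (adjoint u + (2:ℂ) • u)) f0 =
      (adjoint u ∘L u + (adjoint u + (2:ℂ) • u) ∘L (u + (2:ℂ) • adjoint u)) f0 := by
    rw [h11]
  have hau : ∀ f : E, adjoint u (u f) = f := fun f => by
    have h := congrArg (fun T : E →L[ℂ] E => T f) hiso
    simpa using h
  have hL : (u ∘L adjoint u + (u + (2:ℂ) • adjoint u) ∘L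
      (adjoint u + (2:ℂ) • u)) f0 = (2:ℂ) • (u (u f0)) + ((2:ℂ)*2) • f0 := by
    simp only [ContinuousLinearMap.add_apply, ContinuousLinearMap.comp_apply, ContinuousLinearMap.smul_apply, _root_.map_smul, hf0, hau,
      _root_.map_zero, smul_zero, add_zero, zero_add, _root_.map_add, smul_smul]
    module
  have hR : (adjoint u ∘L u + (adjoint u + (2:ℂ) • u) ∘L
      (u + (2:ℂ) • adjoint u)) f0 = (2:ℂ) • (u (u f0)) + (2:ℂ) • f0 := by
    simp only [ContinuousLinearMap.add_apply, ContinuousLinearMap.comp_apply, ContinuousLinearMap.smul_apply, _root_.map_smul, hf0, hau,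
      _root_.map_zero, smul_zero, add_zero, zero_add, _root_.map_add, smul_smul]
    module
  rw [hL, hR] at he
  have h4 : ((2:ℂ)*2) • f0 = (2:ℂ) • f0 := add_left_cancel he
  have h5 : ((2:ℂ)*2 - 2) • f0 = 0 := by rw [sub_smul, h4, sub_self]
  have h6 : f0 = 0 := by
    rcases smul_eq_zero.mp h5 with h | h
    · norm_num at h
    · exact h
  rw [h6, norm_zero] at hn
  norm_num at hn

end AbstractBlock


lemma blockOp_eq_bOp (T₁₁ T₁₂ T₂₁ T₂₂ : H2 →L[ℂ] H2) :
    blockOp T₁₁ T₁₂ T₂₁ T₂₂ = bOp T₁₁ T₁₂ T₂₁ T₂₂ := rfl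

lemma blockOp_fst (T₁₁ T₁₂ T₂₁ T₂₂ : H2 →L[ℂ] H2) (x : H2sq) :
    (blockOp T₁₁ T₁₂ T₂₁ T₂₂ x).fst = T₁₁ x.fst + T₁₂ x.snd := rfl

lemma blockOp_snd (T₁₁ T₁₂ T₂₁ T₂₂ : H2 →L[ℂ] H2) (x : H2sq) :
    (blockOp T₁₁ T₁₂ T₂₁ T₂₂ x).snd = T₂₁ x.fst + T₂₂ x.snd := rfl

section DiagK

/-- `H² ⊕ L²`, the home of the normal extension. -/
abbrev Ksp : Type := WithLp 2 ((↥H2) × L2)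

/-- The diagonal operator `S ⊕ T` on `H² ⊕ L²`. -/
def diagK (S : H2 →L[ℂ] H2) (T : L2 →L[ℂ] L2) : Ksp →L[ℂ] Ksp :=
  ((WithLp.prodContinuousLinearEquiv 2 ℂ (↥H2) L2).symm : (↥H2 × L2) →L[ℂ] Ksp) ∘L
    ((S ∘L ContinuousLinearMap.fst ℂ (↥H2) L2).prod
      (T ∘L ContinuousLinearMap.snd ℂ (↥H2) L2)) ∘L
      ((WithLp.prodContinuousLinearEquiv 2 ℂ (↥H2) L2) : Ksp →L[ℂ] (↥H2 × L2))

variable (S S' : H2 →L[ℂ] H2) (T T' : L2 →L[ℂ] L2)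

lemma diagK_fst (x : Ksp) : (diagK S T x).fst = S x.fst := rfl
lemma diagK_snd (x : Ksp) : (diagK S T x).snd = T x.snd := rfl

lemma Ksp_ext {x y : Ksp} (h1 : x.fst = y.fst) (h2 : x.snd = y.snd) : x = y :=
  (WithLp.ext_iff _).2 (Prod.ext h1 h2)

lemma diagK_comp : diagK S T ∘L diagK S' T' = diagK (S ∘L S') (T ∘L T') :=
  ContinuousLinearMap.ext fun _ => rfl

lemma adjoint_diagK : adjoint (diagK S T) = diagK (adjoint S) (adjoint T) := by
  symm
  rw [ContinuousLinearMap.eq_adjoint_iff]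
  intro x y
  simp only [WithLp.prod_inner_apply, WithLp.ofLp_fst, WithLp.ofLp_snd, diagK_fst, diagK_snd, adjoint_inner_left]

end DiagK

section Visom

/-- `1/√2` as a complex number. -/
def cc : ℂ := ((Real.sqrt 2)⁻¹ : ℝ)

lemma cc_conj_mul : conj cc * cc = (2:ℂ)⁻¹ := by
  rw [cc, Complex.conj_ofReal, ← Complex.ofReal_mul, ← mul_inv,
    Real.mul_self_sqrt (by norm_num)]
  norm_num

/-- The unitary `H² ⊕ H² → H² ⊕ L²` implementing the diagonalization, as a CLM. -/
def Vc : H2sq →L[ℂ] Ksp :=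
  ((WithLp.prodContinuousLinearEquiv 2 ℂ (↥H2) L2).symm : (↥H2 × L2) →L[ℂ] Ksp) ∘L
    ((cc • (ContinuousLinearMap.fst ℂ (↥H2) (↥H2) + ContinuousLinearMap.snd ℂ (↥H2) (↥H2))).prod
      (H2.subtypeL ∘L
        (cc • (ContinuousLinearMap.fst ℂ (↥H2) (↥H2) - ContinuousLinearMap.snd ℂ (↥H2) (↥H2))))) ∘L
      ((WithLp.prodContinuousLinearEquiv 2 ℂ (↥H2) (↥H2)) : H2sq →L[ℂ] (↥H2 × ↥H2))

lemma Vc_fst (x : H2sq) : (Vc x).fst = cc • (x.fst + x.snd) := rfl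
lemma Vc_snd (x : H2sq) : (Vc x).snd = ((cc • (x.fst - x.snd) : H2) : L2) := rfl

lemma Vc_inner (x y : H2sq) : (inner ℂ (Vc x) (Vc y) : ℂ) = inner ℂ x y := by
  simp only [WithLp.prod_inner_apply, WithLp.ofLp_fst, WithLp.ofLp_snd, Vc_fst, Vc_snd, ← Submodule.coe_inner,
    inner_smul_left, inner_smul_right, inner_add_left, inner_add_right,
    inner_sub_left, inner_sub_right]
  rw [inner_smul_left (𝕜 := ℂ) (E := H2), inner_smul_right (𝕜 := ℂ) (E := H2)]
  simp only [inner_smul_left, inner_smul_right, inner_add_left, inner_add_right,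
    inner_sub_left, inner_sub_right]
  linear_combination (2 * (inner ℂ x.fst y.fst : ℂ) + 2 * (inner ℂ x.snd y.snd : ℂ)) * cc_conj_mul

/-- The isometric embedding `H² ⊕ H² → H² ⊕ L²`. -/
def Viso : H2sq →ₗᵢ[ℂ] Ksp :=
  LinearMap.isometryOfInner (E := H2sq) (E' := Ksp) (𝕜 := ℂ) (Vc : H2sq →ₗ[ℂ] Ksp) (by
    intro x y
    exact Vc_inner x y)

lemma Viso_apply (x : H2sq) : Viso x = Vc x := rfl

end Visom

section NormalExt

/-- The self-adjoint operator `2(U + U*)` on `H²`. -/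
def Sop : H2 →L[ℂ] H2 := (2:ℂ) • (toeplitz ζ + adjoint (toeplitz ζ))

/-- The normal operator `-2 M_z` on `L²`. -/
def Top : L2 →L[ℂ] L2 := (-2:ℂ) • Mz

/-- The normal extension `(2(U+U*)) ⊕ (-2 M_z)` on `H² ⊕ L²`. -/
def Nop : Ksp →L[ℂ] Ksp := diagK Sop Top

set_option maxHeartbeats 1000000 in
lemma adjoint_Sop : adjoint Sop = Sop := by
  unfold Sop
  rw [adjoint.map_smulₛₗ, _root_.map_add adjoint, adjoint_adjoint, add_comm]
  congr 1
  exact map_ofNat _ 2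

set_option maxHeartbeats 1000000 in
lemma adjoint_Top : adjoint Top = (-2:ℂ) • Mzb := by
  unfold Top
  rw [adjoint.map_smulₛₗ, adjoint_Mz]
  congr 1
  rw [map_neg, map_ofNat]

lemma diagK_congr {S S' : H2 →L[ℂ] H2} {T T' : L2 →L[ℂ] L2}
    (h1 : S = S') (h2 : T = T') : diagK S T = diagK S' T' := by rw [h1, h2]

set_option maxHeartbeats 1000000 in
lemma Nop_normal : IsNormalOp Nop := by
  show adjoint Nop ∘L Nop = Nop ∘L adjoint Nop
  unfold Nop
  rw [adjoint_diagK, adjoint_Sop, adjoint_Top, diagK_comp, diagK_comp]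
  refine diagK_congr rfl ?_
  unfold Top
  rw [ContinuousLinearMap.smul_comp, ContinuousLinearMap.comp_smul, ContinuousLinearMap.smul_comp, ContinuousLinearMap.comp_smul, Mzb_comp_Mz, Mz_comp_Mzb]

set_option maxHeartbeats 2000000 in
lemma Nop_intertwine (v : H2sq) :
    Nop (Viso v) =
      Viso (blockOp (adjoint (toeplitz ζ))
        (adjoint (toeplitz ζ) + (2:ℂ) • toeplitz ζ)
        (adjoint (toeplitz ζ) + (2:ℂ) • toeplitz ζ) (adjoint (toeplitz ζ)) v) := by
  rw [Viso_apply, Viso_apply]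
  unfold Nop
  refine Ksp_ext ?_ ?_
  · rw [diagK_fst, Vc_fst, Vc_fst, blockOp_fst, blockOp_snd]
    simp only [Sop, _root_.map_smul, ContinuousLinearMap.smul_apply, ContinuousLinearMap.add_apply, _root_.map_add]
    module
  · simp only [diagK_snd, Vc_snd, blockOp_fst, blockOp_snd]
    have key : (-2:ℂ) • ((toeplitz ζ) (cc • (v.fst - v.snd))) =
        cc • (((adjoint (toeplitz ζ)) v.fst +
            (adjoint (toeplitz ζ) + (2:ℂ) • toeplitz ζ) v.snd) -
          ((adjoint (toeplitz ζ) + (2:ℂ) • toeplitz ζ) v.fst +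
            (adjoint (toeplitz ζ)) v.snd)) := by
      simp only [_root_.map_smul, _root_.map_sub, ContinuousLinearMap.add_apply, ContinuousLinearMap.smul_apply]
      module
    calc Top ((cc • (v.fst - v.snd) : H2) : L2)
        = (-2:ℂ) • Mz ((cc • (v.fst - v.snd) : H2) : L2) := rfl
      _ = (-2:ℂ) • (((toeplitz ζ) (cc • (v.fst - v.snd)) : H2) : L2) := by
          rw [toeplitz_coe]
      _ = ((((-2:ℂ) • ((toeplitz ζ) (cc • (v.fst - v.snd))) : H2)) : L2) := by
          rw [Submodule.coe_smul]
      _ = _ := by rw [key]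

end NormalExt



open ContinuousLinearMap in
/-- **Corollary 4.3**: with `U = T_z` the unilateral shift on `H²`, the block operator
`A = [[U*, U* + 2U], [U* + 2U, U*]]` on `H² ⊕ H²` is quasinormal (hence subnormal), and
it is not normal.  In particular, `A` is a subnormal (non-normal) Toeplitz completion of
the partial block Toeplitz matrix `[[U*, ?], [?, U*]]`. -/
theorem quasinormal_completion :
    ∀ U A, U = toeplitz (fun x => ζ x) →
      A = blockOp (adjoint U) (adjoint U + (2 : ℂ) • U)
            (adjoint U + (2 : ℂ) • U) (adjoint U) →
    IsQuasinormalOp A ∧ IsSubnormalOp A ∧ ¬ IsNormalOp A := by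

  intro U A hU hA
  subst hA
  subst hU
  have hmul : adjoint (toeplitz fun x => ζ x) * (toeplitz fun x => ζ x) = 1 := Tz_isometry
  have hiso : adjoint (toeplitz fun x => ζ x) ∘L (toeplitz fun x => ζ x) = 1 := Tz_isometry
  refine ⟨?_, ?_, ?_⟩
  · rw [blockOp_eq_bOp]
    exact bOp_quasi _ hmul
  · exact ⟨Ksp, inferInstance, inferInstance, inferInstance, Viso, Nop, Nop_normal,
      fun v => Nop_intertwine v⟩
  · rw [blockOp_eq_bOp]
    exact bOp_nonnormal _ hiso e0 adjoint_Tz_e0 norm_e0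

end Paper
end
end

section
/- Let A ∈ H²_{M_n} and let Θ = diag(θ₁, …, θ_n) be a diagonal inner matrix function all of whose diagonal entries θ_j are nonconstant scalar inner functions. If Af = 0 for every f in the model space H_Θ := H²_{C^n} ⊖ ΘH²_{C^n}, then A = 0. -/
noncomputable section
open MeasureTheory Complex Filter Matrix
open scoped ENNReal ComplexConjugate Real

namespace Paper

section ProofHelpers

local notation "⟪" x ", " y "⟫" => @inner ℂ _ _ x y

lemma fourierCoeff_congr_ae {f g : 𝕋 → ℂ} (h : f =ᵐ[μh] g) (m : ℤ) :
    fourierCoeff f m = fourierCoeff g m := by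
  unfold fourierCoeff
  exact integral_congr_ae (h.mono fun x hx => by simp only [hx])

lemma norm_fourier_apply (m : ℤ) (x : 𝕋) : ‖fourier m x‖ = 1 := Circle.norm_coe _

lemma integrable_fourier_smul {f : 𝕋 → ℂ} (hf : Integrable f μh) (m : ℤ) :
    Integrable (fun x => fourier m x • f x) μh := by
  simpa [smul_eq_mul] using
    hf.bdd_mul ((map_continuous (fourier m)).aestronglyMeasurable)
      (Eventually.of_forall fun x => (norm_fourier_apply m x).le)

lemma integral_fourier_eq_zero {m : ℤ} (hm : m ≠ 0) : ∫ x, fourier m x ∂μh = 0 := by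
  have h0 : (0 : ℤ) ≠ m := hm.symm
  have h : ⟪(fourierLp 2 0 : L2), fourierLp 2 m⟫ = 0 := orthonormal_fourier.2 h0
  rw [MeasureTheory.L2.inner_def] at h
  rw [← h]
  refine integral_congr_ae ?_
  filter_upwards [coeFn_fourierLp (T := 2 * Real.pi) 2 0, coeFn_fourierLp (T := 2 * Real.pi) 2 m]
    with x h1 h2
  rw [h1, h2, RCLike.inner_apply, fourier_zero, _root_.map_one, mul_one]

lemma fourierCoeff_const' (c : ℂ) (m : ℤ) :
    fourierCoeff (fun _ : 𝕋 => c) m = if m = 0 then c else 0 := by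
  unfold fourierCoeff
  rw [integral_smul_const]
  rcases eq_or_ne m 0 with h | h
  · subst h
    simp only [neg_zero, if_true]
    have : ∫ x, fourier (0 : ℤ) x ∂μh = ∫ _, (1 : ℂ) ∂μh :=
      integral_congr_ae (Eventually.of_forall fun x => fourier_zero)
    rw [this]; simp
  · rw [if_neg h, integral_fourier_eq_zero (by simpa using h), zero_smul]

lemma fourierCoeff_sub' {f g : 𝕋 → ℂ} (hf : Integrable f μh) (hg : Integrable g μh) (m : ℤ) :
    fourierCoeff (fun x => f x - g x) m = fourierCoeff f m - fourierCoeff g m := by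
  unfold fourierCoeff
  simp_rw [smul_sub]
  exact integral_sub (integrable_fourier_smul hf _) (integrable_fourier_smul hg _)

lemma fourierCoeff_conj' (f : 𝕋 → ℂ) (m : ℤ) :
    fourierCoeff (fun x => conj (f x)) m = conj (fourierCoeff f (-m)) := by
  unfold fourierCoeff
  rw [← integral_conj]
  refine integral_congr_ae (Eventually.of_forall fun x => ?_)
  simp only [smul_eq_mul, _root_.map_mul, neg_neg, ← fourier_neg]

/-- Generic push-through-closure lemma. -/
lemma clm_mem_of_mem_spanClosure {X Y : Type} [NormedAddCommGroup X] [NormedSpace ℂ X]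
    [NormedAddCommGroup Y] [NormedSpace ℂ Y] (L : X →L[ℂ] Y) (S : Set X)
    (K : Submodule ℂ Y) (hK : IsClosed (K : Set Y)) (hS : ∀ s ∈ S, L s ∈ K) {x : X}
    (hx : x ∈ (Submodule.span ℂ S).topologicalClosure) : L x ∈ K := by
  have h1 : Submodule.span ℂ S ≤ K.comap (L : X →ₗ[ℂ] Y) :=
    Submodule.span_le.2 fun s hs => by simpa using hS s hs
  have h2 : IsClosed ((K.comap (L : X →ₗ[ℂ] Y)) : Set X) := hK.preimage L.continuous
  have hle := Submodule.topologicalClosure_minimal _ h1 h2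
  exact Submodule.mem_comap.mp (hle hx)

lemma mem_H2_of_fourierCoeff {w : 𝕋 → ℂ} (hw : MemLp w 2 μh)
    (h : ∀ m : ℤ, m < 0 → fourierCoeff w m = 0) : hw.toLp w ∈ H2 := by
  have hs := (fourierBasis (T := 2 * Real.pi)).hasSum_repr (hw.toLp w)
  refine IsClosed.mem_of_tendsto (Submodule.isClosed_topologicalClosure _) hs
    (Eventually.of_forall fun s => ?_)
  refine Submodule.sum_mem _ fun m _ => ?_
  rcases lt_or_ge m 0 with hm | hm
  · have : fourierBasis.repr (hw.toLp w) m = 0 := by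
      rw [fourierBasis_repr, fourierCoeff_congr_ae hw.coeFn_toLp, h m hm]
    rw [this, zero_smul]
    exact Submodule.zero_mem _
  · refine Submodule.smul_mem _ _ (Submodule.le_topologicalClosure _ (Submodule.subset_span ?_))
    rw [coe_fourierBasis]
    exact ⟨m.toNat, by simp only []; rw [Int.toNat_of_nonneg hm]⟩

lemma inner_eq_zero_of_mem_H2 (ψ : L2)
    (hcoef : ∀ m : ℕ, ⟪ψ, fourierLp 2 (m : ℤ)⟫ = 0) {w : L2} (hw : w ∈ H2) :
    ⟪ψ, w⟫ = 0 := by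
  have := clm_mem_of_mem_spanClosure (innerSL ℂ ψ) _ ⊥ isClosed_singleton
    (fun s hs => by
      obtain ⟨m, rfl⟩ := hs
      simpa using hcoef m) hw
  simpa using this

end ProofHelpers

/-- **Lemma 5.6**: let `A ∈ H²_{Mₙ}` and let `Θ = diag(θ₁, …, θₙ)` be a diagonal inner
matrix function with all diagonal entries nonconstant inner functions.  If `Af = 0` (a.e.)
for every `f` in the model space `H_Θ = H²_{ℂⁿ} ⊖ ΘH²_{ℂⁿ}`, then `A = 0` (a.e.). -/
theorem eq_zero_of_vanishing_on_model_space {n : ℕ} (A : 𝕋 → Matrix (Fin n) (Fin n) ℂ)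
    (hA : MatInH2 A) (θd : Fin n → 𝕋 → ℂ)
    (hθ : ∀ j, ScalarInner (θd j)) (hθnc : ∀ j, ¬ AEConst (θd j))
    (hvanish : ∀ f : H2v n,
      (∀ g : H2v n, g ∈ matMulSet (fun x => Matrix.diagonal fun j => θd j x) →
        (inner ℂ ((f : L2v n)) ((g : L2v n)) : ℂ) = 0) →
      (fun x => mApply (A x) (((f : L2v n) : 𝕋 → EuclideanSpace ℂ (Fin n)) x))
        =ᵐ[μh] fun _ => (0 : EuclideanSpace ℂ (Fin n))) :
    ∀ᵐ x ∂μh, A x = 0 := by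
  have key : ∀ j : Fin n, ∀ᵐ x ∂μh, ∀ i, A x i j = 0 := by
    intro j
    obtain ⟨⟨hθtop, hθneg⟩, hθmod⟩ := hθ j
    have hθ2 : MemLp (θd j) 2 μh := hθtop.mono_exponent le_top
    have hθint : Integrable (θd j) μh := hθtop.integrable le_top
    set a : ℂ := fourierCoeff (θd j) 0 with ha
    -- the zeroth Fourier coefficient has modulus < 1
    have hone : MemLp (fun _ : 𝕋 => (1 : ℂ)) 2 μh := memLp_const 1
    have hinner_ou : (inner ℂ (hone.toLp _) (hθ2.toLp _) : ℂ) = a := by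
      rw [MeasureTheory.L2.inner_def]
      have h1 : ∀ᵐ x ∂μh, (inner ℂ ((hone.toLp (fun _ : 𝕋 => (1 : ℂ))) x)
          ((hθ2.toLp (θd j)) x) : ℂ) = θd j x := by
        filter_upwards [hone.coeFn_toLp, hθ2.coeFn_toLp] with x h1 h2
        rw [h1, h2, RCLike.inner_apply, _root_.map_one, mul_one]
      rw [integral_congr_ae h1, ha]
      unfold fourierCoeff
      refine (integral_congr_ae (Eventually.of_forall fun x => ?_)).symm
      rw [neg_zero, fourier_zero, one_smul]
    have hnu : ‖hθ2.toLp (θd j)‖ = 1 := by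
      have h1 : (inner ℂ (hθ2.toLp _) (hθ2.toLp _) : ℂ) = 1 := by
        rw [MeasureTheory.L2.inner_def]
        have h2 : ∀ᵐ x ∂μh, (inner ℂ ((hθ2.toLp (θd j)) x)
            ((hθ2.toLp (θd j)) x) : ℂ) = 1 := by
          filter_upwards [hθ2.coeFn_toLp, hθmod] with x h2 h3
          rw [h2, RCLike.inner_apply, Complex.mul_conj, Complex.normSq_eq_norm_sq,
            h3, one_pow, Complex.ofReal_one]
        rw [integral_congr_ae h2]; simp
      have h3 : ‖hθ2.toLp (θd j)‖ ^ 2 = 1 := by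
        rw [← inner_self_eq_norm_sq (𝕜 := ℂ), h1]; simp
      nlinarith [norm_nonneg (hθ2.toLp (θd j))]
    have hno : ‖hone.toLp (fun _ : 𝕋 => (1 : ℂ))‖ = 1 := by
      have h1 : (inner ℂ (hone.toLp _) (hone.toLp _) : ℂ) = 1 := by
        rw [MeasureTheory.L2.inner_def]
        have h2 : ∀ᵐ x ∂μh, (inner ℂ ((hone.toLp (fun _ : 𝕋 => (1 : ℂ))) x)
            ((hone.toLp (fun _ : 𝕋 => (1 : ℂ))) x) : ℂ) = 1 := by
          filter_upwards [hone.coeFn_toLp] with x h2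
          rw [h2, RCLike.inner_apply, _root_.map_one, mul_one]
        rw [integral_congr_ae h2]; simp
      have h3 : ‖hone.toLp (fun _ : 𝕋 => (1 : ℂ))‖ ^ 2 = 1 := by
        rw [← inner_self_eq_norm_sq (𝕜 := ℂ), h1]; simp
      nlinarith [norm_nonneg (hone.toLp (fun _ : 𝕋 => (1 : ℂ)))]
    have hle : ‖a‖ ≤ 1 := by
      have h1 := norm_inner_le_norm (𝕜 := ℂ) (hone.toLp _) (hθ2.toLp _)
      rwa [hinner_ou, hnu, hno, mul_one] at h1
    have hne : ‖a‖ ≠ 1 := by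
      intro h1
      have ho0 : hone.toLp (fun _ : 𝕋 => (1 : ℂ)) ≠ 0 := by
        intro h; rw [h, norm_zero] at hno; norm_num at hno
      have hu0 : hθ2.toLp (θd j) ≠ 0 := by
        intro h; rw [h, norm_zero] at hnu; norm_num at hnu
      obtain ⟨r, hr0, hru⟩ := (norm_inner_eq_norm_iff ho0 hu0).1
        (by rw [hinner_ou, hno, hnu, mul_one, h1])
      refine hθnc j ⟨r, ?_⟩
      filter_upwards [hθ2.coeFn_toLp, Lp.coeFn_smul r (hone.toLp _), hone.coeFn_toLp]
        with x h2 h3 h4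
      calc θd j x = (hθ2.toLp (θd j) : 𝕋 → ℂ) x := h2.symm
        _ = ((r • hone.toLp (fun _ : 𝕋 => (1 : ℂ)) : L2) : 𝕋 → ℂ) x := by rw [← hru]
        _ = r • ((hone.toLp (fun _ : 𝕋 => (1 : ℂ)) : L2) : 𝕋 → ℂ) x := h3
        _ = r := by rw [h4, smul_eq_mul, mul_one]
    have hlt : ‖a‖ < 1 := lt_of_le_of_ne hle hne
    -- the model-space vector
    have hk2 : MemLp (fun x => 1 - conj a * θd j x) 2 μh :=
      (memLp_const 1).sub (hθ2.const_mul _)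
    have hkcoeff : ∀ m : ℤ, m < 0 → fourierCoeff (fun x => 1 - conj a * θd j x) m = 0 := by
      intro m hm
      rw [fourierCoeff_sub' (integrable_const 1) (hθint.const_mul _) m,
        fourierCoeff_const', if_neg hm.ne, fourierCoeff.const_mul, hθneg m hm, mul_zero, sub_zero]
    have hkH2 : hk2.toLp _ ∈ H2 := mem_H2_of_fourierCoeff hk2 hkcoeff
    have hfmem : (ContinuousLinearMap.toSpanSingleton ℂ
        (EuclideanSpace.single j (1 : ℂ))).compLpL 2 μh (hk2.toLp _) ∈ H2v n := by
      refine clm_mem_of_mem_spanClosure _ _ (H2v n)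
        (Submodule.isClosed_topologicalClosure _) ?_ hkH2
      rintro s ⟨m, rfl⟩
      exact Submodule.le_topologicalClosure _ (Submodule.subset_span ⟨(m, j), rfl⟩)
    have hfco : (((ContinuousLinearMap.toSpanSingleton ℂ
          (EuclideanSpace.single j (1 : ℂ))).compLpL 2 μh (hk2.toLp _) : L2v n) : 𝕋 →
            EuclideanSpace ℂ (Fin n)) =ᵐ[μh]
        fun x => EuclideanSpace.single j (1 - conj a * θd j x) := by
      filter_upwards [ContinuousLinearMap.coeFn_compLpL
        (ContinuousLinearMap.toSpanSingleton ℂ (EuclideanSpace.single j (1 : ℂ)))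
        (hk2.toLp _), hk2.coeFn_toLp] with x h1 h2
      rw [h1, h2, ContinuousLinearMap.toSpanSingleton_apply]
      ext i
      simp only [PiLp.smul_apply, EuclideanSpace.single_apply, smul_eq_mul, mul_ite, mul_one,
        mul_zero]
    -- orthogonality to Θ H²
    have hortho : ∀ g : H2v n, g ∈ matMulSet (fun x => Matrix.diagonal fun j' => θd j' x) →
        (inner ℂ (((⟨_, hfmem⟩ : H2v n) : L2v n)) ((g : L2v n)) : ℂ) = 0 := by
      intro g hg
      obtain ⟨g', hg'⟩ := hg
      have hwH2 : (EuclideanSpace.proj (𝕜 := ℂ) j).compLpL 2 μh (g' : L2v n) ∈ H2 := by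
        refine clm_mem_of_mem_spanClosure _ _ H2
          (Submodule.isClosed_topologicalClosure _) ?_ g'.2
        rintro s ⟨⟨m, i⟩, rfl⟩
        by_cases hij : i = j
        · subst hij
          have heq : (EuclideanSpace.proj (𝕜 := ℂ) i).compLpL 2 μh
              ((ContinuousLinearMap.toSpanSingleton ℂ
                (EuclideanSpace.single i (1 : ℂ))).compLp (fourierLp 2 (m : ℤ))) =
              fourierLp 2 (m : ℤ) := by
            refine Lp.ext ?_
            filter_upwards [ContinuousLinearMap.coeFn_compLpL
              (EuclideanSpace.proj (𝕜 := ℂ) i) ((ContinuousLinearMap.toSpanSingleton ℂ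
                (EuclideanSpace.single i (1 : ℂ))).compLp (fourierLp 2 (m : ℤ))),
              ContinuousLinearMap.coeFn_compLp (ContinuousLinearMap.toSpanSingleton ℂ
                (EuclideanSpace.single i (1 : ℂ))) (fourierLp 2 (m : ℤ)),
              coeFn_fourierLp (T := 2 * Real.pi) 2 (m : ℤ)] with x h1 h2 h3
            rw [h1, h2, h3, ContinuousLinearMap.toSpanSingleton_apply]
            simp [EuclideanSpace.single_apply]
          rw [heq]
          exact Submodule.le_topologicalClosure _ (Submodule.subset_span ⟨m, rfl⟩)
        · have heq : (EuclideanSpace.proj (𝕜 := ℂ) j).compLpL 2 μh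
              ((ContinuousLinearMap.toSpanSingleton ℂ
                (EuclideanSpace.single i (1 : ℂ))).compLp (fourierLp 2 (m : ℤ))) = 0 := by
            refine Lp.ext ?_
            filter_upwards [ContinuousLinearMap.coeFn_compLpL
              (EuclideanSpace.proj (𝕜 := ℂ) j) ((ContinuousLinearMap.toSpanSingleton ℂ
                (EuclideanSpace.single i (1 : ℂ))).compLp (fourierLp 2 (m : ℤ))),
              ContinuousLinearMap.coeFn_compLp (ContinuousLinearMap.toSpanSingleton ℂ
                (EuclideanSpace.single i (1 : ℂ))) (fourierLp 2 (m : ℤ)),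
              Lp.coeFn_zero (E := ℂ) (p := 2) (μ := μh)] with x h1 h2 h3
            rw [h1, h2, h3, ContinuousLinearMap.toSpanSingleton_apply]
            simp [EuclideanSpace.single_apply, Ne.symm hij]
          rw [heq]
          exact Submodule.zero_mem _
      -- the symbol function
      have hψ2 : MemLp (fun x => conj (θd j x) - conj a) 2 μh := by
        refine MemLp.sub ?_ (memLp_const _)
        refine hθ2.of_le (RCLike.continuous_conj.comp_aestronglyMeasurable hθ2.1) ?_
        exact Eventually.of_forall fun x => (RCLike.norm_conj _).le
      have hψc : ∀ m : ℕ, (inner ℂ (hψ2.toLp _) (fourierLp 2 (m : ℤ)) : ℂ) = 0 := by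
        intro m
        have h1 : fourierCoeff (fun x => conj (θd j x) - conj a) (m : ℤ) = 0 := by
          have h2 : (fun x => conj (θd j x) - conj a) = fun x => conj (θd j x - a) := by
            funext x; rw [map_sub]
          rw [h2, fourierCoeff_conj', fourierCoeff_sub' hθint (integrable_const a)]
          rcases Nat.eq_zero_or_pos m with hm | hm
          · subst hm
            simp [← ha, fourierCoeff_const']
          · have hmn : -(m : ℤ) < 0 := by exact_mod_cast neg_lt_zero.mpr (by exact_mod_cast hm)
            rw [hθneg _ hmn, fourierCoeff_const', if_neg hmn.ne, sub_zero, map_zero]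
        have h3 : (inner ℂ (fourierLp 2 (m : ℤ)) (hψ2.toLp _) : ℂ) = 0 := by
          have h4 := fourierBasis_repr (T := 2 * Real.pi) (hψ2.toLp _) (m : ℤ)
          rw [HilbertBasis.repr_apply_apply, coe_fourierBasis] at h4
          rw [h4, fourierCoeff_congr_ae hψ2.coeFn_toLp, h1]
        rw [← inner_conj_symm, h3, map_zero]
      have hmain : (inner ℂ (((⟨_, hfmem⟩ : H2v n) : L2v n)) ((g : L2v n)) : ℂ) =
          inner ℂ (hψ2.toLp _) ((EuclideanSpace.proj (𝕜 := ℂ) j).compLpL 2 μh (g' : L2v n)) := by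
        rw [MeasureTheory.L2.inner_def, MeasureTheory.L2.inner_def]
        refine integral_congr_ae ?_
        filter_upwards [hfco, hg', hθmod, ContinuousLinearMap.coeFn_compLpL
          (EuclideanSpace.proj (𝕜 := ℂ) j) (g' : L2v n), hψ2.coeFn_toLp]
          with x h1 h2 h3 h4 h5
        have hc : conj (θd j x) * θd j x = 1 := by
          rw [mul_comm, Complex.mul_conj, Complex.normSq_eq_norm_sq, h3,
            one_pow, Complex.ofReal_one]
        rw [h1, h2, h4, h5, EuclideanSpace.inner_single_left, RCLike.inner_apply]
        simp only [mApply, WithLp.equiv_symm_apply, PiLp.toLp_apply, Matrix.mulVec_diagonal,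
          WithLp.equiv_apply, PiLp.proj_apply, map_sub, _root_.map_mul, _root_.map_one,
          Complex.conj_conj]
        linear_combination (-(a * (((g' : L2v n) : 𝕋 → EuclideanSpace ℂ (Fin n)) x j))) * hc
      rw [hmain]
      exact inner_eq_zero_of_mem_H2 _ hψc hwH2
    have hv := hvanish ⟨_, hfmem⟩ hortho
    filter_upwards [hv, hfco, hθmod] with x h1 h2 h3
    intro i
    have hk0 : (1 : ℂ) - conj a * θd j x ≠ 0 := by
      intro h0
      have h4 : (1 : ℂ) = conj a * θd j x := by rwa [sub_eq_zero] at h0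
      have h5 := congrArg norm h4
      rw [norm_one, norm_mul, RCLike.norm_conj, h3, mul_one] at h5
      exact absurd h5.symm (ne_of_lt hlt)
    have h6 : mApply (A x) (EuclideanSpace.single j (1 - conj a * θd j x)) i = 0 := by
      rw [← h2, h1]
      rfl
    simp only [mApply, WithLp.equiv_symm_apply, PiLp.toLp_apply, WithLp.equiv_apply, PiLp.ofLp_single,
      Matrix.mulVec_single] at h6
    exact (mul_eq_zero.mp h6).resolve_right hk0
  have hall : ∀ᵐ x ∂μh, ∀ j : Fin n, ∀ i, A x i j = 0 := ae_all_iff.2 key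
  filter_upwards [hall] with x hx
  ext i j'
  rw [Matrix.zero_apply]
  exact hx j' i

end Paper
end
end
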